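/- arXiv:2605.25143 — 2 statements merged into one kernel-verified Lean document; each statement's English description precedes it below -/
import Mathlib

section
/- Let X be a finite set, π̃ : X → [0,∞) an unnormalized target with Σ_x π̃(x) > 0, and let q_new, q_hist be probability distributions on X with mixture q_mix = α q_new + (1−α) q_hist for some 0 < α < 1, such that π := π̃/Σπ̃ is absolutely continuous w.r.t. q_mix. Suppose q̃_new = Z·q_new and q̃_hist = Z·q_hist share a common normalizer Z > 0, and define F(x) = π̃(x)/q̃_mix(x) with q̃_mix = α q̃_new + (1−α) q̃_hist. Given N i.i.d. samples B from q_new and Nt i.i.d. samples S from q_hist (t a fixed positive integer), assign weights W(z) = α F(z) for z ∈ B and W(z) = (1−α)F(z)/t for z ∈ S. Then the self-normalized estimator ( Σ_{z ∈ B∪S} W(z) f(z) ) / ( Σ_{z ∈ B∪S} W(z) ) converges in probability to E_π[f] as N → ∞, for every f : X → ℝ. -/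
open Finset MeasureTheory ProbabilityTheory Filter Topology

lemma lln_aux {X : Type*} [Fintype X] [mX : MeasurableSpace X] [MeasurableSingletonClass X]
    {Ω : Type*} [MeasurableSpace Ω] (Pr : Measure Ω) [IsProbabilityMeasure Pr]
    (q : X → ℝ) (hq0 : ∀ x, 0 ≤ q x) (Y : ℕ → Ω → X) (hm : ∀ i, Measurable (Y i))
    (hpind : Pairwise fun i j => IndepFun (Y i) (Y j) Pr)
    (hlaw : ∀ i x, Pr (Y i ⁻¹' {x}) = ENNReal.ofReal (q x))
    (g : X → ℝ) :
    ∀ᵐ ω ∂Pr, Tendsto (fun n : ℕ => (∑ i ∈ range n, g (Y i ω)) / n) atTop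
      (𝓝 (∑ x, q x * g x)) := by
  have hg : Measurable g := measurable_of_countable g
  have hmap : ∀ i, Pr.map (Y i) = Pr.map (Y 0) := by
    intro i
    apply Measure.ext_of_singleton
    intro x
    rw [Measure.map_apply (hm i) (measurableSet_singleton x),
        Measure.map_apply (hm 0) (measurableSet_singleton x), hlaw, hlaw]
  have hident : ∀ i, IdentDistrib (g ∘ Y i) (g ∘ Y 0) Pr Pr :=
    fun i => (IdentDistrib.comp ⟨(hm i).aemeasurable, (hm 0).aemeasurable, hmap i⟩ hg)
  have hint : Integrable (g ∘ Y 0) Pr := by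
    refine Integrable.mono' (integrable_const (∑ x, ‖g x‖))
      ((hg.comp (hm 0)).aestronglyMeasurable) ?_
    filter_upwards with ω
    exact Finset.single_le_sum (fun x _ => norm_nonneg (g x)) (Finset.mem_univ _)
  have hindep : Pairwise (Function.onFun (IndepFun · · Pr) fun i => g ∘ Y i) :=
    fun i j hij => (hpind hij).comp hg hg
  have hE : Pr[g ∘ Y 0] = ∑ x, q x * g x := by
    simp only [Function.comp]
    rw [← integral_map (hm 0).aemeasurable hg.aestronglyMeasurable]
    have : IsProbabilityMeasure (Pr.map (Y 0)) := Measure.isProbabilityMeasure_map (hm 0).aemeasurable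
    rw [integral_fintype (Integrable.of_finite)]
    refine Finset.sum_congr rfl fun x _ => ?_
    rw [measureReal_def, Measure.map_apply (hm 0) (measurableSet_singleton x), hlaw, smul_eq_mul,
      ENNReal.toReal_ofReal (hq0 x)]
  have := strong_law_ae_real (fun i => g ∘ Y i) hint hindep hident
  rw [hE] at this
  exact this

lemma mul_count_tendsto (a : ℕ → ℝ) (L : ℝ) (t : ℕ) (ht : 1 ≤ t)
    (h : Tendsto (fun n : ℕ => (∑ i ∈ range n, a i) / n) atTop (𝓝 L)) :
    Tendsto (fun n : ℕ => (∑ i ∈ range (n * t), a i) / n) atTop (𝓝 ((t : ℝ) * L)) := by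
  have htt : Tendsto (fun n : ℕ => n * t) atTop atTop :=
    tendsto_atTop_atTop_of_monotone (fun m n hmn => Nat.mul_le_mul_right t hmn)
      (fun b => ⟨b, Nat.le_mul_of_pos_right b ht⟩)
  have h2 := (h.comp htt).const_mul (t : ℝ)
  refine h2.congr' ?_
  filter_upwards [eventually_ge_atTop 1] with n hn
  have hn0 : (n : ℝ) ≠ 0 := by
    exact_mod_cast Nat.one_le_iff_ne_zero.mp hn
  have ht0 : (t : ℝ) ≠ 0 := by
    exact_mod_cast Nat.one_le_iff_ne_zero.mp ht
  simp only [Function.comp_apply, Nat.cast_mul]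
  field_simp

/-- Fixed-count mixture-proposal estimator of Power Backtrack SMC: with `N`
i.i.d. samples from `q_new`, `N·t` i.i.d. samples from `q_hist`, mixture-
corrected weights `W = α·F` on new samples and `W = (1−α)·F/t` on historical
samples (where `F = π̃/q̃_mix` and `q̃_new = Z q_new`, `q̃_hist = Z q_hist` share
the normalizer `Z`), the self-normalized estimator converges in probability to
`E_π[f]` as `N → ∞`. -/
theorem stmt_9 {X : Type*} [Fintype X] [mX : MeasurableSpace X]
    [MeasurableSingletonClass X]
    {Ω : Type*} [MeasurableSpace Ω] (Pr : Measure Ω) [IsProbabilityMeasure Pr]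
    (πt : X → ℝ) (qnew qhist qmix π : X → ℝ) (α Z : ℝ) (t : ℕ) (ht : 1 ≤ t)
    (f : X → ℝ)
    (hπt0 : ∀ x, 0 ≤ πt x) (hπtpos : 0 < ∑ x, πt x)
    (hqnew0 : ∀ x, 0 ≤ qnew x) (hqnew1 : ∑ x, qnew x = 1)
    (hqhist0 : ∀ x, 0 ≤ qhist x) (hqhist1 : ∑ x, qhist x = 1)
    (hα0 : 0 < α) (hα1 : α < 1) (hZ : 0 < Z)
    (hqmix : ∀ x, qmix x = α * qnew x + (1 - α) * qhist x)
    (hπ : ∀ x, π x = πt x / ∑ y, πt y)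
    (habs : ∀ x, qmix x = 0 → π x = 0)
    (F : X → ℝ)
    (hF : ∀ x, F x = if Z * qmix x = 0 then 0 else πt x / (Z * qmix x))
    (Xb Xh : ℕ → Ω → X)
    (hmb : ∀ i, Measurable (Xb i)) (hmh : ∀ i, Measurable (Xh i))
    (hindep : iIndepFun (Sum.elim Xb Xh) Pr)
    (hlawb : ∀ i x, Pr (Xb i ⁻¹' {x}) = ENNReal.ofReal (qnew x))
    (hlawh : ∀ i x, Pr (Xh i ⁻¹' {x}) = ENNReal.ofReal (qhist x)) :
    TendstoInMeasure Pr
      (fun N ω =>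
        ((∑ i ∈ Finset.range N, α * F (Xb i ω) * f (Xb i ω)) +
          ∑ j ∈ Finset.range (N * t), ((1 - α) * F (Xh j ω) / t) * f (Xh j ω)) /
        ((∑ i ∈ Finset.range N, α * F (Xb i ω)) +
          ∑ j ∈ Finset.range (N * t), (1 - α) * F (Xh j ω) / t))
      atTop (fun _ => ∑ x, π x * f x) := by
  set S := ∑ x, πt x with hS
  have ht0 : (t : ℝ) ≠ 0 := by exact_mod_cast Nat.one_le_iff_ne_zero.mp ht
  -- key pointwise identity
  have hkey : ∀ x, qmix x * F x = πt x / Z := by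
    intro x
    rw [hF]
    split_ifs with h
    · rcases mul_eq_zero.1 h with h' | h'
      · exact absurd h' hZ.ne'
      · have hπx := habs x h'
        rw [hπ] at hπx
        have : πt x = 0 := by
          rcases div_eq_zero_iff.1 hπx with h'' | h''
          · exact h''
          · exact absurd h'' hπtpos.ne'
        simp [h', this]
    · have hq : qmix x ≠ 0 := fun hq => h (by rw [hq, mul_zero])
      field_simp
  -- pairwise independence within each block
  have hpb : Pairwise fun i j => IndepFun (Xb i) (Xb j) Pr := by
    intro i j hij
    exact hindep.indepFun (show (Sum.inl i : ℕ ⊕ ℕ) ≠ Sum.inl j by simpa using hij)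
  have hph : Pairwise fun i j => IndepFun (Xh i) (Xh j) Pr := by
    intro i j hij
    exact hindep.indepFun (show (Sum.inr i : ℕ ⊕ ℕ) ≠ Sum.inr j by simpa using hij)
  -- four LLN applications
  have hA := lln_aux Pr qnew hqnew0 Xb hmb hpb hlawb (fun x => α * F x * f x)
  have hA' := lln_aux Pr qnew hqnew0 Xb hmb hpb hlawb (fun x => α * F x)
  have hB := lln_aux Pr qhist hqhist0 Xh hmh hph hlawh (fun x => ((1 - α) * F x / t) * f x)
  have hB' := lln_aux Pr qhist hqhist0 Xh hmh hph hlawh (fun x => (1 - α) * F x / t)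
  -- limit values
  set L1 : ℝ := (∑ x, qnew x * (α * F x * f x)) +
      (t : ℝ) * ∑ x, qhist x * (((1 - α) * F x / t) * f x) with hL1
  set L2 : ℝ := (∑ x, qnew x * (α * F x)) +
      (t : ℝ) * ∑ x, qhist x * ((1 - α) * F x / t) with hL2
  have hL1v : L1 = (∑ x, πt x * f x) / Z := by
    rw [hL1, Finset.mul_sum, ← Finset.sum_add_distrib, Finset.sum_div]
    refine Finset.sum_congr rfl fun x _ => ?_
    have : qnew x * (α * F x * f x) + (t : ℝ) * (qhist x * (((1 - α) * F x / t) * f x))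
        = (qmix x * F x) * f x := by
      rw [hqmix]; field_simp
    rw [this, hkey]
    ring
  have hL2v : L2 = S / Z := by
    rw [hL2, Finset.mul_sum, ← Finset.sum_add_distrib, hS, Finset.sum_div]
    refine Finset.sum_congr rfl fun x _ => ?_
    have : qnew x * (α * F x) + (t : ℝ) * (qhist x * ((1 - α) * F x / t))
        = qmix x * F x := by
      rw [hqmix]; field_simp
    rw [this, hkey]
  have hL2ne : L2 ≠ 0 := by
    rw [hL2v]
    positivity
  have htarget : L1 / L2 = ∑ x, π x * f x := by
    rw [hL1v, hL2v, div_div_div_cancel_right₀]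
    · rw [Finset.sum_div]
      refine (Finset.sum_congr rfl fun x _ => ?_).symm
      rw [hπ]; ring
    · exact hZ.ne'
  -- a.e. convergence of the estimator
  have hae : ∀ᵐ ω ∂Pr, Tendsto (fun N : ℕ =>
        ((∑ i ∈ Finset.range N, α * F (Xb i ω) * f (Xb i ω)) +
          ∑ j ∈ Finset.range (N * t), ((1 - α) * F (Xh j ω) / t) * f (Xh j ω)) /
        ((∑ i ∈ Finset.range N, α * F (Xb i ω)) +
          ∑ j ∈ Finset.range (N * t), (1 - α) * F (Xh j ω) / t))
      atTop (𝓝 (∑ x, π x * f x)) := by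
    filter_upwards [hA, hA', hB, hB'] with ω h1 h2 h3 h4
    have hnum : Tendsto (fun N : ℕ =>
        ((∑ i ∈ Finset.range N, α * F (Xb i ω) * f (Xb i ω)) +
          ∑ j ∈ Finset.range (N * t), ((1 - α) * F (Xh j ω) / t) * f (Xh j ω)) / N)
        atTop (𝓝 L1) := by
      have := h1.add (mul_count_tendsto (fun j => ((1 - α) * F (Xh j ω) / t) * f (Xh j ω)) _ t ht h3)
      refine this.congr fun N => ?_
      rw [add_div]
    have hden : Tendsto (fun N : ℕ =>
        ((∑ i ∈ Finset.range N, α * F (Xb i ω)) +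
          ∑ j ∈ Finset.range (N * t), (1 - α) * F (Xh j ω) / t) / N)
        atTop (𝓝 L2) := by
      have := h2.add (mul_count_tendsto (fun j => (1 - α) * F (Xh j ω) / t) _ t ht h4)
      refine this.congr fun N => ?_
      rw [add_div]
    rw [← htarget]
    refine (hnum.div hden hL2ne).congr' ?_
    filter_upwards [eventually_ge_atTop 1] with N hN
    have hN0 : (N : ℝ) ≠ 0 := by exact_mod_cast Nat.one_le_iff_ne_zero.mp hN
    simp only [Pi.div_apply]
    rw [div_div_div_cancel_right₀ hN0]
  -- measurability of the estimators
  have hmeas : ∀ N : ℕ, AEStronglyMeasurable (fun ω =>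
        ((∑ i ∈ Finset.range N, α * F (Xb i ω) * f (Xb i ω)) +
          ∑ j ∈ Finset.range (N * t), ((1 - α) * F (Xh j ω) / t) * f (Xh j ω)) /
        ((∑ i ∈ Finset.range N, α * F (Xb i ω)) +
          ∑ j ∈ Finset.range (N * t), (1 - α) * F (Xh j ω) / t)) Pr := by
    intro N
    refine Measurable.aestronglyMeasurable (Measurable.div (Measurable.add ?_ ?_)
      (Measurable.add ?_ ?_))
    · exact Finset.measurable_sum _ fun i _ =>
        (measurable_of_countable (fun x => α * F x * f x)).comp (hmb i)
    · exact Finset.measurable_sum _ fun j _ =>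
        (measurable_of_countable (fun x => (1 - α) * F x / t * f x)).comp (hmh j)
    · exact Finset.measurable_sum _ fun i _ =>
        (measurable_of_countable (fun x => α * F x)).comp (hmb i)
    · exact Finset.measurable_sum _ fun j _ =>
        (measurable_of_countable (fun x => (1 - α) * F x / t)).comp (hmh j)
  exact tendstoInMeasure_of_tendsto_ae hmeas hae
end

section
/- In Subpool Selection with pool size n, parent budget M, subpool size K = max(M, ⌊ρn⌋) with K < n, and any fixed element z of the pool that is NOT among the globally top-M scored elements: if fewer than M elements of the pool have score strictly greater than z within some size-K subset containing z, then z can be selected. Quantitatively, suppose exactly m ≥ M elements of the pool have score strictly greater than z. Then the probability that the uniformly random size-K subpool D contains z and at most M−1 of those m higher-scored elements is positive whenever K ≤ n − (m − M + 1); hence z has positive probability of being selected as a parent, in contrast to global Top-M selection, under which z is selected with probability 0. -/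
open Finset

/-- SPS breaks the blocker problem: let `z` be an element of the pool that is
outscored by exactly `m ≥ M` elements (so global Top-`M` never selects `z`).
If `K ≤ n − (m − M + 1)`, then with positive probability the uniformly random
size-`K` subpool contains `z` together with at most `M−1` of its blockers, so
`z` has positive probability of being selected as a parent, whereas under
global Top-`M` selection `z` is selected with probability `0`. -/
theorem stmt_16 {I : Type*} [LinearOrder I] [DecidableEq I]
    (P : Finset I) (n M K m : ℕ)
    (hn : P.card = n) (hM1 : 1 ≤ M) (hMK : M ≤ K) (hKn : K < n)
    (z : I) (hz : z ∈ P)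
    (hm : (P.filter (fun y => z < y)).card = m) (hmM : M ≤ m)
    (hKb : K ≤ n - (m - M + 1)) :
    (¬ (P.filter (fun y => z < y)).card < M) ∧
    0 < ((P.powersetCard K).filter
          (fun D => z ∈ D ∧ (D.filter (fun y => z < y)).card ≤ M - 1)).card := by
  constructor
  · omega
  · rw [Finset.card_pos]
    set A := P.filter (fun y => z < y) with hA
    set B := P \ A with hB
    have hzB : z ∈ B := by
      simp [hB, hA, hz]
    have hcardB : B.card = n - m := by
      rw [hB, card_sdiff_of_subset (filter_subset _ _), hn, hm]
    have hmn : m ≤ n := by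
      rw [← hn, ← hm]; exact card_filter_le _ _
    -- pick S1 ⊆ A with card M - 1
    obtain ⟨S1, hS1A, hS1⟩ := Finset.exists_subset_card_eq (s := A) (n := M - 1) (by omega)
    -- pick S2' ⊆ B.erase z with card K - (M-1) - 1
    have hBe : (B.erase z).card = n - m - 1 := by
      rw [card_erase_of_mem hzB, hcardB]
    obtain ⟨S2', hS2'B, hS2'⟩ := Finset.exists_subset_card_eq (s := B.erase z)
      (n := K - (M - 1) - 1) (by omega)
    set D : Finset I := S1 ∪ insert z S2' with hD
    have hzS1 : z ∉ S1 := fun h => by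
      have := hS1A h; simp [hA] at this
    have hdisj : Disjoint S1 (insert z S2') := by
      rw [Finset.disjoint_insert_right]
      refine ⟨hzS1, ?_⟩
      have : S2' ⊆ B := hS2'B.trans (erase_subset _ _)
      exact Finset.disjoint_left.mpr fun a ha hb =>
        (Finset.mem_sdiff.mp (this hb)).2 (hS1A ha)
    have hzS2' : z ∉ S2' := fun h => (Finset.notMem_erase z B) (hS2'B h)
    have hcardD : D.card = K := by
      rw [hD, card_union_of_disjoint hdisj, card_insert_of_notMem hzS2', hS1, hS2']
      omega
    refine ⟨D, Finset.mem_filter.mpr ⟨Finset.mem_powersetCard.mpr ⟨?_, hcardD⟩, ?_, ?_⟩⟩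
    · rw [hD]
      apply Finset.union_subset (hS1A.trans (filter_subset _ _))
      apply Finset.insert_subset hz
      exact (hS2'B.trans (erase_subset _ _)).trans (sdiff_subset)
    · simp [hD]
    · have hsub : D.filter (fun y => z < y) ⊆ S1 := by
        intro x hx
        rw [Finset.mem_filter, hD, Finset.mem_union] at hx
        rcases hx with ⟨hx1 | hx1, hx2⟩
        · exact hx1
        · exfalso
          rcases Finset.mem_insert.mp hx1 with rfl | hx1
          · exact lt_irrefl _ hx2
          · have := Finset.mem_sdiff.mp (hS2'B.trans (erase_subset _ _) hx1)
            exact this.2 (Finset.mem_filter.mpr ⟨this.1, hx2⟩)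
      calc (D.filter (fun y => z < y)).card ≤ S1.card := card_le_card hsub
        _ = M - 1 := hS1
end
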